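/- Let A be a Banach algebra possessing a bounded left approximate identity. Then every right A-module map on A is bounded; that is, if φ : A → A is a linear map satisfying φ(xa) = φ(x)a for all x, a ∈ A, then φ is continuous. -/

import Mathlib

open Filter Unitization

set_option linter.unusedSectionVars false
set_option maxHeartbeats 4000000

noncomputable section CohenAux

variable {A : Type*} [NonUnitalNormedRing A] [NormedSpace ℂ A]
    [IsScalarTower ℂ A A] [SMulCommClass ℂ A A] [CompleteSpace A]

/-- The L¹ unitization. -/
abbrev UB (A : Type*) [NonUnitalNormedRing A] [NormedSpace ℂ A] : Type _ :=
  WithLp 1 (Unitization ℂ A)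

/-- Canonical embedding of `A` into its L¹ unitization. -/
def iotaB (a : A) : UB A := WithLp.toLp 1 (a : Unitization ℂ A)

lemma norm_iotaB (a : A) : ‖iotaB a‖ = ‖a‖ := WithLp.unitization_norm_inr a

lemma iotaB_add (a b : A) : iotaB (a + b) = iotaB a + iotaB b := by
  unfold iotaB
  rw [inr_add ℂ a b]; rfl

lemma iotaB_mul (a b : A) : iotaB (a * b) = iotaB a * iotaB b := by
  unfold iotaB
  rw [inr_mul ℂ a b]; rfl

lemma iotaB_smul (c : ℂ) (a : A) : iotaB (c • a) = c • iotaB a := by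
  unfold iotaB
  rw [inr_smul ℂ c a]; rfl

lemma iotaB_sub (a b : A) : iotaB (a - b) = iotaB a - iotaB b := by
  unfold iotaB
  rw [inr_sub ℂ a b]; rfl

lemma isometry_iotaB : Isometry (iotaB (A := A)) := WithLp.unitization_isometry_inr

lemma iotaB_injective : Function.Injective (iotaB (A := A)) := isometry_iotaB.injective

lemma isClosed_range_iotaB : IsClosed (Set.range (iotaB (A := A))) :=
  (isometry_iotaB.isClosedEmbedding).isClosed_range

lemma mul_iotaB (z : UB A) (a : A) : ∃ y : A, z * iotaB a = iotaB y := by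
  refine ⟨(WithLp.ofLp z).fst • a + (WithLp.ofLp z).snd * a, ?_⟩
  show WithLp.toLp 1 (WithLp.ofLp z * (↑a : Unitization ℂ A)) = WithLp.toLp 1 _
  congr 1
  apply Unitization.ext
  · simp [iotaB, Unitization.fst_mul]
  · simp only [iotaB, Unitization.snd_mul, Unitization.snd_inr, Unitization.fst_inr,
      mul_zero, zero_smul, add_zero]

lemma norm_one_UB : ‖(1 : UB A)‖ = 1 := by
  rw [WithLp.unitization_norm_def]
  show ‖(1 : Unitization ℂ A).fst‖ + ‖(1 : Unitization ℂ A).snd‖ = 1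
  simp


lemma exists_unit_one_add (s : UB A) (hs : ‖s‖ ≤ 1/2) :
    ∃ u : (UB A)ˣ, (u : UB A) = 1 + s ∧ ‖((u⁻¹ : (UB A)ˣ) : UB A)‖ ≤ 2 ∧
      ‖((u⁻¹ : (UB A)ˣ) : UB A) - 1‖ ≤ 2 * ‖s‖ := by
  have hlt : ‖-s‖ < 1 := by rw [norm_neg]; linarith
  refine ⟨Units.oneSub (-s) hlt, by rw [Units.val_oneSub, sub_neg_eq_add], ?_, ?_⟩
  all_goals {
    set u := Units.oneSub (-s) hlt with hu
    have hid : ((u⁻¹ : (UB A)ˣ) : UB A) - 1 = -(((u⁻¹ : (UB A)ˣ) : UB A) * s) := by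
      have h1 : ((u⁻¹ : (UB A)ˣ) : UB A) * (1 + s) = 1 := by
        rw [← sub_neg_eq_add, ← Units.val_oneSub (-s) hlt, ← hu, Units.inv_mul]
      rw [mul_add, mul_one] at h1
      rw [← h1]; abel
    have hb : ‖((u⁻¹ : (UB A)ˣ) : UB A)‖ ≤ 2 := by
      have h2 : ‖((u⁻¹ : (UB A)ˣ) : UB A)‖ ≤ ‖(1 : UB A)‖ + ‖((u⁻¹ : (UB A)ˣ) : UB A) * s‖ := by
        calc ‖((u⁻¹ : (UB A)ˣ) : UB A)‖
            = ‖1 + (((u⁻¹ : (UB A)ˣ) : UB A) - 1)‖ := by rw [add_sub_cancel]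
          _ ≤ ‖(1 : UB A)‖ + ‖((u⁻¹ : (UB A)ˣ) : UB A) - 1‖ := norm_add_le _ _
          _ = ‖(1 : UB A)‖ + ‖((u⁻¹ : (UB A)ˣ) : UB A) * s‖ := by rw [hid, norm_neg]
      have h3 : ‖((u⁻¹ : (UB A)ˣ) : UB A) * s‖ ≤ ‖((u⁻¹ : (UB A)ˣ) : UB A)‖ * ‖s‖ :=
        norm_mul_le _ _
      have h4 : ‖((u⁻¹ : (UB A)ˣ) : UB A)‖ * ‖s‖ ≤ ‖((u⁻¹ : (UB A)ˣ) : UB A)‖ * (1/2) := by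
        have := norm_nonneg ((u⁻¹ : (UB A)ˣ) : UB A); nlinarith
      rw [norm_one_UB] at h2
      linarith
    have hc : ‖((u⁻¹ : (UB A)ˣ) : UB A) - 1‖ ≤ 2 * ‖s‖ := by
      rw [hid, norm_neg]
      calc ‖((u⁻¹ : (UB A)ˣ) : UB A) * s‖ ≤ ‖((u⁻¹ : (UB A)ˣ) : UB A)‖ * ‖s‖ := norm_mul_le _ _
        _ ≤ 2 * ‖s‖ := by have := norm_nonneg s; nlinarith
    first | exact hb | exact hc }

lemma cohen_step
    {ι : Type*} (l : Filter ι) [l.NeBot] (e : ι → A) {C : ℝ} (hC : 1 ≤ C)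
    (he : ∀ i, ‖e i‖ ≤ C)
    (he_approx : ∀ a : A, Tendsto (fun i => e i * a) l (nhds a))
    (x : ℕ → A) (hx : Tendsto x atTop (nhds 0)) {X : ℝ} (hX : ∀ n, ‖x n‖ ≤ X)
    (k : ℕ) (b : A) (g : (UB A)ˣ)
    (hg : (g : UB A) = iotaB b + (((1 - 1/(2*(C+1)))^k : ℝ) : ℂ) • 1) :
    ∃ (b' : A) (g' : (UB A)ˣ),
      (g' : UB A) = iotaB b' + (((1 - 1/(2*(C+1)))^(k+1) : ℝ) : ℂ) • 1 ∧
      ‖b' - b‖ ≤ C * (1 - 1/(2*(C+1)))^k ∧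
      (∀ n, ‖(↑g'⁻¹ : UB A) * iotaB (x n) - (↑g⁻¹ : UB A) * iotaB (x n)‖ ≤ (1/2)^k) ∧
      (∃ L : ℝ, 0 ≤ L ∧ ∀ n,
        ‖(↑g'⁻¹ : UB A) * iotaB (x n) - (↑g⁻¹ : UB A) * iotaB (x n)‖ ≤ L * ‖x n‖) := by
  have norm_mul3 : ∀ (p q : UB A) (Γ γ : ℝ), ‖p‖ ≤ Γ → ‖q‖ ≤ γ → 0 ≤ Γ →
      ‖p * q‖ ≤ Γ * γ := fun p q Γ γ h1 h2 h3 =>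
    le_trans (norm_mul_le _ _) (mul_le_mul h1 h2 (norm_nonneg _) h3)
  have hC0 : (0:ℝ) < C := lt_of_lt_of_le one_pos hC
  set lam : ℝ := 1/(2*(C+1)) with hlam_def
  set r : ℝ := 1 - lam with hr_def
  have hlam_pos : 0 < lam := by positivity
  have hlam_le : lam ≤ 1/4 := by
    rw [hlam_def, div_le_div_iff₀ (by linarith) (by norm_num)]
    linarith
  have hlamC : lam * (C + 1) = 1/2 := by rw [hlam_def]; field_simp
  have hr_ge : 3/4 ≤ r := by rw [hr_def]; linarith
  have hr_lt : r < 1 := by rw [hr_def]; linarith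
  have hr_pos : (0:ℝ) < r := by linarith
  have hrk_pos : (0:ℝ) < r ^ k := by positivity
  have hrk_le : r ^ k ≤ 1 := pow_le_one₀ (by linarith) hr_lt.le
  set G : ℝ := ‖((g⁻¹ : (UB A)ˣ) : UB A)‖ with hG_def
  have hGle : ‖((g⁻¹ : (UB A)ˣ) : UB A)‖ ≤ G := le_rfl
  have hG0 : (0:ℝ) ≤ G := norm_nonneg _
  have hX0 : (0:ℝ) ≤ X := le_trans (norm_nonneg _) (hX 0)
  set q : ℝ := (1/2 : ℝ)^k with hq_def
  have hq : (0:ℝ) < q := by positivity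
  set H : ℝ := (G+1)^2*(X+1) with hH_def
  have hH : (0:ℝ) < H := by positivity
  set ε₁ : ℝ := min (1/(2*(G+1))) (q/(4*H)) with hε₁_def
  have hε₁_pos : 0 < ε₁ := lt_min (by positivity) (by positivity)
  have hε₁a : ε₁ ≤ 1/(2*(G+1)) := min_le_left _ _
  have hε₁b : 4 * H * ε₁ ≤ q := by
    have h1 : ε₁ ≤ q/(4*H) := min_le_right _ _
    rw [le_div_iff₀ (by positivity)] at h1
    linarith
  have hε₁1 : ε₁ ≤ 1 := le_trans hε₁a (by rw [div_le_one (by linarith)]; linarith)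
  set ε₂ : ℝ := q/(4*(G+1)) with hε₂_def
  have hε₂_pos : 0 < ε₂ := by positivity
  have hε₂q : ε₂ * (4*(G+1)) = q := by rw [hε₂_def]; field_simp
  set L : ℝ := 6*G*(1+C) + 2*G*G with hL_def
  have hL0 : 0 ≤ L := by positivity
  set δ : ℝ := q/(L+1) with hδ_def
  have hδ_pos : 0 < δ := by positivity
  have hδq : δ * (L+1) = q := by rw [hδ_def]; field_simp
  clear_value lam r G q H ε₁ ε₂ L δ
  obtain ⟨N, hN⟩ : ∃ N : ℕ, ∀ n ≥ N, ‖x n‖ ≤ δ := by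
    have h1 := (NormedAddCommGroup.tendsto_nhds_zero.mp hx) δ hδ_pos
    rw [eventually_atTop] at h1
    obtain ⟨N, hN⟩ := h1
    exact ⟨N, fun n hn => (hN n hn).le⟩
  have happ : ∀ (z : A) (ε : ℝ), 0 < ε → ∀ᶠ i in l, ‖e i * z - z‖ ≤ ε := by
    intro z ε hε
    have h2 := Metric.tendsto_nhds.mp (he_approx z) ε hε
    filter_upwards [h2] with i hi
    rw [dist_eq_norm] at hi
    exact hi.le
  have hfin : ∀ᶠ i in l, ∀ n ∈ Set.Iio N, ‖e i * x n - x n‖ ≤ ε₂ :=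
    (Filter.eventually_all_finite (Set.finite_Iio N)).mpr
      (fun n _ => happ (x n) ε₂ hε₂_pos)
  obtain ⟨i, hia, hin⟩ := ((happ b ε₁ hε₁_pos).and hfin).exists
  set a : A := e i with ha_def
  have haC : ‖a‖ ≤ C := he i
  -- the unit v
  have hrne : ((r:ℝ):ℂ) ≠ 0 := by
    simp only [ne_eq, Complex.ofReal_eq_zero]
    exact ne_of_gt hr_pos
  set t : UB A := ((lam/r : ℝ) : ℂ) • iotaB a with ht_def
  have ht_norm : ‖t‖ ≤ 1/2 := by
    rw [ht_def, norm_smul, norm_iotaB]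
    have h1 : ‖((lam/r : ℝ) : ℂ)‖ = lam/r := by
      rw [Complex.norm_real, Real.norm_eq_abs, abs_of_pos (div_pos hlam_pos hr_pos)]
    rw [h1, div_mul_eq_mul_div, div_le_iff₀ hr_pos]
    nlinarith only [mul_le_mul_of_nonneg_left haC hlam_pos.le, hlamC, hr_def, hlam_pos]
  obtain ⟨u', hu'val, hu'inv, _⟩ := exists_unit_one_add t ht_norm
  set v : (UB A)ˣ :=
    (Units.map (algebraMap ℂ (UB A)).toMonoidHom (Units.mk0 ((r:ℝ):ℂ) hrne)) * u' with hv_def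
  have hvval : (v : UB A) = ((lam:ℝ):ℂ) • iotaB a + ((r:ℝ):ℂ) • 1 := by
    have h0 : (v : UB A) = algebraMap ℂ (UB A) ((r:ℝ):ℂ) * (1 + t) := by
      rw [hv_def, Units.val_mul, hu'val]
      rfl
    rw [h0, Algebra.algebraMap_eq_smul_one, smul_mul_assoc, one_mul, smul_add, ht_def, smul_smul]
    have h2 : (((r:ℝ):ℂ) * ((lam/r : ℝ):ℂ)) = ((lam:ℝ):ℂ) := by
      push_cast
      field_simp
    rw [h2, add_comm]
  have hvinv : ‖((v⁻¹ : (UB A)ˣ) : UB A)‖ ≤ 3 := by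
    have h1 : ((v⁻¹ : (UB A)ˣ) : UB A)
        = ((u'⁻¹ : (UB A)ˣ) : UB A) * algebraMap ℂ (UB A) (((r:ℝ):ℂ)⁻¹) := by
      rw [hv_def, mul_inv_rev, Units.val_mul, Units.coe_map_inv]
      rfl
    have h2 : ‖algebraMap ℂ (UB A) (((r:ℝ):ℂ)⁻¹)‖ = r⁻¹ := by
      rw [Algebra.algebraMap_eq_smul_one, norm_smul, norm_one_UB, mul_one, norm_inv,
        Complex.norm_real, Real.norm_eq_abs, abs_of_pos hr_pos]
    have h3 : r * r⁻¹ = 1 := mul_inv_cancel₀ (ne_of_gt hr_pos)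
    have h4 : (0:ℝ) ≤ r⁻¹ := inv_nonneg.mpr hr_pos.le
    rw [h1]
    have h5 : ‖((u'⁻¹ : (UB A)ˣ) : UB A) * algebraMap ℂ (UB A) (((r:ℝ):ℂ)⁻¹)‖ ≤ 2 * r⁻¹ := by
      rw [← h2] at *
      exact norm_mul3 _ _ _ _ hu'inv le_rfl (by norm_num)
    have h6 : 2 * r⁻¹ ≤ 3 := by nlinarith only [h3, h4, hr_ge]
    linarith only [h5, h6]
  -- key identity
  have hrc : ((r:ℝ):ℂ) = 1 - ((lam:ℝ):ℂ) := by rw [hr_def]; push_cast; ring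
  have hkey : ∀ z : A, ((v⁻¹ : (UB A)ˣ) : UB A) * iotaB z - iotaB z
      = ((v⁻¹ : (UB A)ˣ) : UB A) * (((lam:ℝ):ℂ) • iotaB (z - a * z)) := by
    intro z
    have h1 : iotaB z - (v : UB A) * iotaB z = ((lam:ℝ):ℂ) • iotaB (z - a * z) := by
      rw [hvval, add_mul, smul_mul_assoc, smul_mul_assoc, one_mul, ← iotaB_mul,
        iotaB_sub, hrc]
      module
    calc ((v⁻¹ : (UB A)ˣ) : UB A) * iotaB z - iotaB z
        = ((v⁻¹ : (UB A)ˣ) : UB A) * (iotaB z - (v : UB A) * iotaB z) := by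
          rw [mul_sub, ← mul_assoc, Units.inv_mul, one_mul]
      _ = ((v⁻¹ : (UB A)ˣ) : UB A) * (((lam:ℝ):ℂ) • iotaB (z - a * z)) := by rw [h1]
  have hkey_norm : ∀ z : A, ‖((v⁻¹ : (UB A)ˣ) : UB A) * iotaB z - iotaB z‖
      ≤ 3 * (lam * ‖z - a * z‖) := by
    intro z
    rw [hkey z]
    have h2 : ‖((lam:ℝ):ℂ) • iotaB (z - a * z)‖ = lam * ‖z - a * z‖ := by
      rw [norm_smul, norm_iotaB, Complex.norm_real, Real.norm_eq_abs, abs_of_pos hlam_pos]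
    rw [← h2]
    exact norm_mul3 _ _ _ _ hvinv le_rfl (by norm_num)
  -- the element d and the unit u
  set d : UB A := ((v⁻¹ : (UB A)ˣ) : UB A) * iotaB b - iotaB b with hd_def
  have hd_norm : ‖d‖ ≤ ε₁ := by
    have h1 := hkey_norm b
    have h2 : ‖b - a * b‖ ≤ ε₁ := by rw [norm_sub_rev]; exact hia
    nlinarith only [h1, mul_le_mul_of_nonneg_left h2 hlam_pos.le,
      mul_nonneg hlam_pos.le hε₁_pos.le, hε₁_pos, hlam_le]
  set s : UB A := ((g⁻¹ : (UB A)ˣ) : UB A) * d with hs_def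
  have hs_norm : ‖s‖ ≤ G * ε₁ := norm_mul3 _ _ _ _ hGle hd_norm hG0
  have hs_half : ‖s‖ ≤ 1/2 := by
    have h1 : G * ε₁ ≤ G * (1/(2*(G+1))) := mul_le_mul_of_nonneg_left hε₁a hG0
    have h2 : G * (1/(2*(G+1))) ≤ 1/2 := by
      rw [mul_one_div, div_le_div_iff₀ (by linarith : (0:ℝ) < 2*(G+1)) (by norm_num)]
      linarith only [hG0]
    linarith only [h1, h2, hs_norm]
  obtain ⟨u, huval, huinv, huinv1⟩ := exists_unit_one_add s hs_half
  have huinv1' : ‖((u⁻¹ : (UB A)ˣ) : UB A) - 1‖ ≤ 2 * (G * ε₁) := by linarith only [hs_norm, huinv1]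
  -- the new unit and the new element
  set g' : (UB A)ˣ := v * g * u with hg'_def
  set b' : A := b + ((lam * r^k : ℝ) : ℂ) • a with hb'_def
  -- the value identity
  have hval : (g' : UB A) = iotaB b' + (((r^(k+1)) : ℝ) : ℂ) • 1 := by
    rw [hg'_def, Units.val_mul, Units.val_mul, huval]
    have h1 : (v : UB A) * (g : UB A) * (1 + s) = (v : UB A) * (g : UB A) + (v : UB A) * d := by
      rw [mul_add, mul_one, hs_def, mul_assoc, Units.mul_inv_cancel_left]
    rw [h1]
    have h2 : (v : UB A) * d = iotaB b - (v : UB A) * iotaB b := by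
      rw [hd_def, mul_sub, Units.mul_inv_cancel_left]
    have h3 : (v : UB A) * (g : UB A) = (v : UB A) * iotaB b + ((r^k : ℝ) : ℂ) • (v : UB A) := by
      rw [hg, mul_add, mul_smul_comm, mul_one]
    rw [h2, h3]
    have h4 : ((r^k : ℝ) : ℂ) • (v : UB A)
        = iotaB (((lam * r^k : ℝ) : ℂ) • a) + (((r^(k+1)) : ℝ) : ℂ) • (1 : UB A) := by
      rw [hvval, smul_add, smul_smul, smul_smul, iotaB_smul]
      congr 2
      · push_cast
        ring
      · push_cast
        ring
    rw [hb'_def, iotaB_add, h4]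
    abel
  -- norm of the b-increment
  have hbstep : ‖b' - b‖ ≤ C * r^k := by
    rw [hb'_def, add_sub_cancel_left, norm_smul, Complex.norm_real, Real.norm_eq_abs,
      abs_of_pos (mul_pos hlam_pos hrk_pos)]
    nlinarith only [mul_le_mul_of_nonneg_left haC (mul_pos hlam_pos hrk_pos).le,
      mul_pos hC0 hrk_pos, (show (0:ℝ) ≤ 1 - lam by linarith only [hlam_le])]
  -- the inverse of g'
  have hginv' : ((g'⁻¹ : (UB A)ˣ) : UB A)
      = ((u⁻¹ : (UB A)ˣ) : UB A) * (((g⁻¹ : (UB A)ˣ) : UB A) * ((v⁻¹ : (UB A)ˣ) : UB A)) := by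
    have h1 : g'⁻¹ = u⁻¹ * (g⁻¹ * v⁻¹) := by
      rw [hg'_def, mul_inv_rev, mul_inv_rev]
    rw [h1, Units.val_mul, Units.val_mul]
  have hdecomp : ∀ n, ((g'⁻¹ : (UB A)ˣ) : UB A) * iotaB (x n)
        - ((g⁻¹ : (UB A)ˣ) : UB A) * iotaB (x n)
      = ((u⁻¹ : (UB A)ˣ) : UB A) * (((g⁻¹ : (UB A)ˣ) : UB A)
          * (((v⁻¹ : (UB A)ˣ) : UB A) * iotaB (x n) - iotaB (x n)))
        + (((u⁻¹ : (UB A)ˣ) : UB A) - 1) * (((g⁻¹ : (UB A)ˣ) : UB A) * iotaB (x n)) := by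
    intro n
    rw [hginv']
    noncomm_ring
  have hbound : ∀ n, ‖((g'⁻¹ : (UB A)ˣ) : UB A) * iotaB (x n)
        - ((g⁻¹ : (UB A)ˣ) : UB A) * iotaB (x n)‖
      ≤ 2 * (G * (3 * (lam * ‖x n - a * x n‖))) + 2 * (G * ε₁) * (G * ‖x n‖) := by
    intro n
    rw [hdecomp n]
    refine le_trans (norm_add_le _ _) (add_le_add ?_ ?_)
    · exact norm_mul3 _ _ _ _ huinv
        (norm_mul3 _ _ _ _ hGle (hkey_norm (x n)) hG0) (by norm_num)
    · refine norm_mul3 _ _ _ _ huinv1' ?_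
        (mul_nonneg (by norm_num) (mul_nonneg hG0 hε₁_pos.le))
      rw [← norm_iotaB (x n)]
      exact norm_mul3 _ _ _ _ hGle le_rfl hG0
  have hsubmul : ∀ n, ‖x n - a * x n‖ ≤ (1 + C) * ‖x n‖ := by
    intro n
    calc ‖x n - a * x n‖ ≤ ‖x n‖ + ‖a * x n‖ := norm_sub_le _ _
      _ ≤ ‖x n‖ + ‖a‖ * ‖x n‖ := by
          have h9 := norm_mul_le a (x n)
          linarith only [h9]
      _ ≤ (1 + C) * ‖x n‖ := by
          linarith only [mul_le_mul_of_nonneg_right haC (norm_nonneg (x n))]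
  have hLbound : ∀ n, ‖((g'⁻¹ : (UB A)ˣ) : UB A) * iotaB (x n)
        - ((g⁻¹ : (UB A)ˣ) : UB A) * iotaB (x n)‖ ≤ L * ‖x n‖ := by
    intro n
    have h1 := hbound n
    have h2 := hsubmul n
    have h3 : 2 * (G * (3 * (lam * ‖x n - a * x n‖))) ≤ 6 * G * (1+C) * ‖x n‖ := by
      nlinarith only [mul_le_mul_of_nonneg_left h2 (mul_nonneg hlam_pos.le hG0),
        mul_nonneg (mul_nonneg hG0 (by linarith only [hC0] : (0:ℝ) ≤ 1 + C)) (norm_nonneg (x n)),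
        (show (0:ℝ) ≤ 1 - lam by linarith only [hlam_le])]
    have h4 : 2 * (G * ε₁) * (G * ‖x n‖) ≤ 2 * G * G * ‖x n‖ := by
      nlinarith only [mul_nonneg (mul_nonneg hG0 hG0) (norm_nonneg (x n)),
        (show (0:ℝ) ≤ 1 - ε₁ by linarith only [hε₁1])]
    rw [hL_def]
    linarith only [h1, h3, h4]
  refine ⟨b', g', hval, hbstep, ?_, ⟨L, hL0, hLbound⟩⟩
  -- the uniform (1/2)^k bound
  intro n
  rcases lt_or_ge n N with hn | hn
  · have h1 := hbound n
    have h2 : ‖x n - a * x n‖ ≤ ε₂ := by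
      rw [norm_sub_rev]
      exact hin n hn
    have h3 : 2 * (G * (3 * (lam * ‖x n - a * x n‖))) ≤ q/2 := by
      have h3a : 2 * (G * (3 * (lam * ‖x n - a * x n‖))) ≤ 2 * G * ε₂ := by
        nlinarith only [mul_le_mul_of_nonneg_left h2 (mul_nonneg hG0 hlam_pos.le),
          mul_nonneg hG0 hε₂_pos.le, hlam_le]
      have h3b : 2 * G * ε₂ ≤ q/2 := by linarith only [hε₂q, hε₂_pos]
      linarith only [h3a, h3b]
    have h4 : 2 * (G * ε₁) * (G * ‖x n‖) ≤ q/2 := by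
      have h4a : G * ‖x n‖ ≤ (G+1) * (X+1) := by
        nlinarith only [mul_le_mul_of_nonneg_left (hX n) hG0, norm_nonneg (x n), hX0, hG0]
      have h4b : 2 * (G * ε₁) * (G * ‖x n‖) ≤ 2 * ((G+1) * ε₁) * ((G+1) * (X+1)) := by
        have k1 : G * (G * ‖x n‖) ≤ (G+1) * ((G+1) * (X+1)) := by
          have k2 : G * (G * ‖x n‖) ≤ (G+1) * (G * ‖x n‖) :=
            mul_le_mul_of_nonneg_right (by linarith) (mul_nonneg hG0 (norm_nonneg _))
          have k3 : (G+1) * (G * ‖x n‖) ≤ (G+1) * ((G+1) * (X+1)) :=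
            mul_le_mul_of_nonneg_left h4a (by linarith)
          linarith only [k2, k3]
        nlinarith only [k1, hε₁_pos]
      have h4c : 2 * ((G+1) * ε₁) * ((G+1) * (X+1)) = 2 * H * ε₁ := by
        rw [hH_def]
        ring
      have h4d : 2 * H * ε₁ ≤ q/2 := by linarith only [hε₁b]
      linarith only [h4b, h4c, h4d]
    linarith only [h1, h3, h4]
  · have h1 := hLbound n
    have h2 : ‖x n‖ ≤ δ := hN n hn
    have h3 : L * ‖x n‖ ≤ L * δ := mul_le_mul_of_nonneg_left h2 hL0
    have h4 : L * δ ≤ q := by linarith only [hδq, hδ_pos]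
    linarith only [h1, h3, h4]

/-- Sequential Cohen factorization: every null sequence factors as `b * c n` with `c` null. -/
lemma cohen_factorization
    {ι : Type*} (l : Filter ι) [l.NeBot] (e : ι → A)
    (he_bdd : ∃ C : ℝ, ∀ i, ‖e i‖ ≤ C)
    (he_approx : ∀ a : A, Tendsto (fun i => e i * a) l (nhds a))
    (x : ℕ → A) (hx : Tendsto x atTop (nhds 0)) :
    ∃ (b : A) (c : ℕ → A), Tendsto c atTop (nhds 0) ∧ ∀ n, x n = b * c n := by
  obtain ⟨C₀, hC₀⟩ := he_bdd
  set C : ℝ := max C₀ 1 with hC_def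
  have hC : 1 ≤ C := le_max_right _ _
  have he : ∀ i, ‖e i‖ ≤ C := fun i => le_trans (hC₀ i) (le_max_left _ _)
  obtain ⟨X, hX⟩ : ∃ X : ℝ, ∀ n, ‖x n‖ ≤ X := by
    have h1 := (NormedAddCommGroup.tendsto_nhds_zero.mp hx) 1 one_pos
    rw [eventually_atTop] at h1
    obtain ⟨N, hN⟩ := h1
    refine ⟨(Finset.range (N+1)).sup' (by simp) (fun n => ‖x n‖) + 1, fun n => ?_⟩
    rcases le_or_gt n N with h | h
    · have h2 : ‖x n‖ ≤ (Finset.range (N+1)).sup' (by simp) (fun n => ‖x n‖) :=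
        Finset.le_sup' (fun n => ‖x n‖) (Finset.mem_range.mpr (by omega))
      linarith
    · have h2 := (hN n h.le).le
      have h3 : (0:ℝ) ≤ (Finset.range (N+1)).sup' (by simp) (fun n => ‖x n‖) :=
        le_trans (norm_nonneg (x 0)) (Finset.le_sup' (fun n => ‖x n‖) (Finset.mem_range.mpr (by omega)))
      linarith
  set r : ℝ := 1 - 1/(2*(C+1)) with hr_def
  have hC0 : (0:ℝ) < C := lt_of_lt_of_le one_pos hC
  have hr_pos : 0 < r := by
    rw [hr_def]
    have : 1/(2*(C+1)) ≤ 1/4 := by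
      rw [div_le_div_iff₀ (by linarith) (by norm_num)]; linarith
    linarith
  have hr_lt : r < 1 := by
    rw [hr_def]
    have : 0 < 1/(2*(C+1)) := by positivity
    linarith
  -- the recursively constructed states
  set Inv : ℕ → A × (UB A)ˣ → Prop :=
    fun k p => (p.2 : UB A) = iotaB p.1 + ((r^k : ℝ) : ℂ) • 1 with hInv_def
  have inv0 : Inv 0 ((0 : A), (1 : (UB A)ˣ)) := by
    rw [hInv_def]
    have h0 : iotaB (0 : A) = 0 := by
      have := iotaB_sub (0:A) 0
      simp at this
      simpa using this
    simp [h0]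
  have key : ∀ k (p : A × (UB A)ˣ), Inv k p → ∃ q : A × (UB A)ˣ, Inv (k+1) q ∧
      (‖q.1 - p.1‖ ≤ C * r^k ∧
       (∀ n, ‖(↑q.2⁻¹ : UB A) * iotaB (x n) - (↑p.2⁻¹ : UB A) * iotaB (x n)‖ ≤ (1/2)^k) ∧
       (∃ L : ℝ, 0 ≤ L ∧ ∀ n,
         ‖(↑q.2⁻¹ : UB A) * iotaB (x n) - (↑p.2⁻¹ : UB A) * iotaB (x n)‖ ≤ L * ‖x n‖)) := by
    intro k p hp
    obtain ⟨b', g', h1, h2, h3, h4⟩ := cohen_step l e hC he he_approx x hx hX k p.1 p.2 hp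
    exact ⟨(b', g'), h1, h2, h3, h4⟩
  let T : ℕ → Type _ := fun k => {p : A × (UB A)ˣ // Inv k p}
  let step : ∀ k, T k → T (k+1) := fun k p =>
    ⟨(key k p.1 p.2).choose, (key k p.1 p.2).choose_spec.1⟩
  let st : ∀ k, T k := fun k => Nat.rec ⟨((0 : A), (1 : (UB A)ˣ)), inv0⟩ step k
  have hst : ∀ k, st (k+1) = step k (st k) := fun k => rfl
  set bb : ℕ → A := fun k => (st k).1.1 with hbb_def
  set gg : ℕ → (UB A)ˣ := fun k => (st k).1.2 with hgg_def
  have hgg0 : gg 0 = 1 := rfl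
  have hrel : ∀ k, ‖bb (k+1) - bb k‖ ≤ C * r^k ∧
      (∀ n, ‖(↑(gg (k+1))⁻¹ : UB A) * iotaB (x n) - (↑(gg k)⁻¹ : UB A) * iotaB (x n)‖ ≤ (1/2)^k) ∧
      (∃ L : ℝ, 0 ≤ L ∧ ∀ n,
        ‖(↑(gg (k+1))⁻¹ : UB A) * iotaB (x n) - (↑(gg k)⁻¹ : UB A) * iotaB (x n)‖ ≤ L * ‖x n‖) := by
    intro k
    have h1 : (st (k+1)).1 = (key k (st k).1 (st k).2).choose := by rw [hst k]
    have h2 := (key k (st k).1 (st k).2).choose_spec.2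
    rw [← h1] at h2
    exact h2
  -- limit of bb
  have hbb_cauchy : CauchySeq bb := by
    refine cauchySeq_of_le_geometric r C hr_lt (fun k => ?_)
    rw [dist_eq_norm, norm_sub_rev]
    exact (hrel k).1
  obtain ⟨binf, hbinf⟩ := cauchySeq_tendsto_of_complete hbb_cauchy
  -- limit of the values of gg
  have hggval : Tendsto (fun k => ((gg k : (UB A)ˣ) : UB A)) atTop (nhds (iotaB binf)) := by
    have h1 : ∀ k, ((gg k : (UB A)ˣ) : UB A) = iotaB (bb k) + ((r^k : ℝ) : ℂ) • 1 :=
      fun k => (st k).2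
    simp only [h1]
    have h2 : Tendsto (fun k => iotaB (bb k)) atTop (nhds (iotaB binf)) :=
      (isometry_iotaB.continuous.tendsto binf).comp hbinf
    have h3 : Tendsto (fun k => ((r^k : ℝ) : ℂ) • (1 : UB A)) atTop (nhds 0) := by
      have h4 : Tendsto (fun k : ℕ => r^k) atTop (nhds 0) :=
        tendsto_pow_atTop_nhds_zero_of_lt_one hr_pos.le hr_lt
      have h5 : Tendsto (fun k : ℕ => ((r^k : ℝ) : ℂ)) atTop (nhds 0) := by
        rw [show ((0:ℂ)) = ((0:ℝ):ℂ) by norm_num]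
        exact (Complex.continuous_ofReal.tendsto 0).comp h4
      simpa using h5.smul_const (1 : UB A)
    simpa using h2.add h3
  -- the approximants w k n and their limits
  set w : ℕ → ℕ → UB A := fun k n => ((gg k)⁻¹ : (UB A)ˣ) * iotaB (x n) with hw_def
  have hw_cauchy : ∀ n, CauchySeq (fun k => w k n) := by
    intro n
    refine cauchySeq_of_le_geometric (1/2) 1 (by norm_num) (fun k => ?_)
    rw [dist_eq_norm, norm_sub_rev, one_mul]
    exact (hrel k).2.1 n
  have hWex : ∀ n, ∃ Wn : UB A, Tendsto (fun k => w k n) atTop (nhds Wn) :=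
    fun n => cauchySeq_tendsto_of_complete (hw_cauchy n)
  choose W hW using hWex
  -- the factorization identity
  have hfact : ∀ n, iotaB (x n) = iotaB binf * W n := by
    intro n
    have h1 : ∀ k, ((gg k : (UB A)ˣ) : UB A) * w k n = iotaB (x n) := by
      intro k
      rw [hw_def]
      exact Units.mul_inv_cancel_left _ _
    have h2 : Tendsto (fun k => ((gg k : (UB A)ˣ) : UB A) * w k n) atTop
        (nhds (iotaB binf * W n)) := hggval.mul (hW n)
    simp only [h1] at h2
    exact tendsto_nhds_unique tendsto_const_nhds h2
  -- W n lies in the range of iotaB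
  have hWrange : ∀ n, W n ∈ Set.range (iotaB (A := A)) := by
    intro n
    refine isClosed_range_iotaB.mem_of_tendsto (hW n) (Eventually.of_forall (fun k => ?_))
    obtain ⟨y, hy⟩ := mul_iotaB (((gg k)⁻¹ : (UB A)ˣ) : UB A) (x n)
    exact ⟨y, hy.symm⟩
  choose c hc using hWrange
  refine ⟨binf, c, ?_, ?_⟩
  · -- c tends to zero
    set Lf : ℕ → ℝ := fun k => ((hrel k).2.2).choose with hLf_def
    have hLf0 : ∀ k, 0 ≤ Lf k := fun k => ((hrel k).2.2).choose_spec.1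
    have hLfb : ∀ k n, ‖w (k+1) n - w k n‖ ≤ Lf k * ‖x n‖ :=
      fun k n => ((hrel k).2.2).choose_spec.2 n
    have tele1 : ∀ m n, ‖w m n - w 0 n‖ ≤ (∑ j ∈ Finset.range m, Lf j) * ‖x n‖ := by
      intro m n
      induction m with
      | zero => simp
      | succ m ih =>
        calc ‖w (m+1) n - w 0 n‖ ≤ ‖w (m+1) n - w m n‖ + ‖w m n - w 0 n‖ := by
              have := norm_add_le (w (m+1) n - w m n) (w m n - w 0 n)
              simpa using this
          _ ≤ Lf m * ‖x n‖ + (∑ j ∈ Finset.range m, Lf j) * ‖x n‖ :=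
              add_le_add (hLfb m n) ih
          _ = (∑ j ∈ Finset.range (m+1), Lf j) * ‖x n‖ := by
              rw [Finset.sum_range_succ]
              ring
    have tele2 : ∀ n m j, m ≤ j → ‖w j n - w m n‖ ≤ 2*(1/2:ℝ)^m - 2*(1/2:ℝ)^j := by
      intro n m
      refine Nat.le_induction ?_ ?_
      · simp
      · intro j hmj ih
        have h1 := (hrel j).2.1 n
        calc ‖w (j+1) n - w m n‖ ≤ ‖w (j+1) n - w j n‖ + ‖w j n - w m n‖ := by
              have := norm_add_le (w (j+1) n - w j n) (w j n - w m n)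
              simpa using this
          _ ≤ (1/2:ℝ)^j + (2*(1/2:ℝ)^m - 2*(1/2:ℝ)^j) := add_le_add h1 ih
          _ = 2*(1/2:ℝ)^m - 2*(1/2:ℝ)^(j+1) := by
              rw [pow_succ]
              ring
    have hWm : ∀ m n, ‖W n - w m n‖ ≤ 2*(1/2:ℝ)^m := by
      intro m n
      have h1 : Tendsto (fun j => ‖w j n - w m n‖) atTop (nhds ‖W n - w m n‖) :=
        ((hW n).sub_const _).norm
      refine le_of_tendsto h1 ?_
      rw [eventually_atTop]
      refine ⟨m, fun j hj => ?_⟩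
      have h2 := tele2 n m j hj
      have h3 : (0:ℝ) ≤ 2*(1/2:ℝ)^j := by positivity
      linarith
    have hw0 : ∀ n, w 0 n = iotaB (x n) := by
      intro n
      simp only [hw_def, hgg0, inv_one, Units.val_one, one_mul]
    rw [NormedAddCommGroup.tendsto_nhds_zero]
    intro ε hε
    obtain ⟨m, hm⟩ : ∃ m : ℕ, 2*(1/2:ℝ)^m < ε/2 := by
      obtain ⟨m, hm⟩ := exists_pow_lt_of_lt_one (show (0:ℝ) < ε/4 by linarith) (by norm_num : (1/2:ℝ) < 1)
      exact ⟨m, by linarith⟩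
    set S : ℝ := ∑ j ∈ Finset.range m, Lf j with hS_def
    have hS0 : 0 ≤ S := Finset.sum_nonneg (fun j _ => hLf0 j)
    have hx2 := (NormedAddCommGroup.tendsto_nhds_zero.mp hx) (ε/(2*(S+1))) (by positivity)
    filter_upwards [hx2] with n hn
    have hcW : ‖c n‖ = ‖W n‖ := by rw [← hc n, norm_iotaB]
    have h1 : ‖W n‖ ≤ ‖W n - w m n‖ + ‖w m n - w 0 n‖ + ‖w 0 n‖ := by
      have := norm_add_le (W n - w m n + (w m n - w 0 n)) (w 0 n)
      have h2 := norm_add_le (W n - w m n) (w m n - w 0 n)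
      calc ‖W n‖ = ‖W n - w m n + (w m n - w 0 n) + w 0 n‖ := by congr 1; abel
        _ ≤ ‖W n - w m n + (w m n - w 0 n)‖ + ‖w 0 n‖ := this
        _ ≤ ‖W n - w m n‖ + ‖w m n - w 0 n‖ + ‖w 0 n‖ := by linarith
    have h2 : ‖w 0 n‖ = ‖x n‖ := by rw [hw0 n, norm_iotaB]
    have h3 : (S+1) * ‖x n‖ < ε/2 := by
      have h4 : (S+1) * ‖x n‖ < (S+1) * (ε/(2*(S+1))) := by
        apply mul_lt_mul_of_pos_left hn (by linarith)
      have hSne : S + 1 ≠ 0 := by positivity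
      have h5 : (S+1) * (ε/(2*(S+1))) = ε/2 := by field_simp
      linarith
    have h6 := hWm m n
    have h7 := tele1 m n
    rw [hcW]
    calc ‖W n‖ ≤ ‖W n - w m n‖ + ‖w m n - w 0 n‖ + ‖w 0 n‖ := h1
      _ ≤ 2*(1/2:ℝ)^m + S * ‖x n‖ + ‖x n‖ := by rw [h2]; exact add_le_add (add_le_add h6 h7) le_rfl
      _ < ε := by linarith only [hm, h3, h6, h7]
  · -- the factorization
    intro n
    apply iotaB_injective
    rw [iotaB_mul, hc n]
    exact hfact n

end CohenAux

/-- Let `A` be a Banach algebra possessing a bounded left approximate identity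
(a bounded net `(e i)` with `e i * a → a` for every `a`).  Then every right `A`-module map
`φ : A → A` (a linear map with `φ (x * a) = φ x * a`) is continuous. -/
theorem module_map_continuous_of_bounded_left_approx_identity
    {A : Type*} [NonUnitalNormedRing A] [NormedSpace ℂ A]
    [IsScalarTower ℂ A A] [SMulCommClass ℂ A A] [CompleteSpace A]
    {ι : Type*} (l : Filter ι) [l.NeBot] (e : ι → A)
    (he_bdd : ∃ C : ℝ, ∀ i, ‖e i‖ ≤ C)
    (he_approx : ∀ a : A, Filter.Tendsto (fun i => e i * a) l (nhds a))
    (φ : A →ₗ[ℂ] A) (hφ : ∀ x a : A, φ (x * a) = φ x * a) :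
    Continuous φ := by
  have h0 : ContinuousAt φ 0 := by
    rw [ContinuousAt, map_zero, tendsto_iff_seq_tendsto]
    intro u hu
    obtain ⟨b, c, hc, hbc⟩ := cohen_factorization l e he_bdd he_approx u hu
    have h1 : ∀ n, φ (u n) = φ b * c n := fun n => by rw [hbc n, hφ b (c n)]
    have h2 : Tendsto (fun n => φ b * c n) atTop (nhds (φ b * 0)) := hc.const_mul (φ b)
    rw [mul_zero] at h2
    exact h2.congr (fun n => (h1 n).symm)
  exact continuous_of_continuousAt_zero φ h0
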